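/- For every density matrix ρ and unit vector |ψ⟩ on a finite-dimensional complex Hilbert space, ⟨ψ| ρ |ψ⟩ + ‖ρ − |ψ⟩⟨ψ|‖_tr² ≤ 1. -/

import Mathlib

open Matrix
open scoped ComplexOrder

/-- Trace distance between two matrices: half the sum of the absolute values of the
eigenvalues of their (Hermitian) difference. -/
noncomputable def traceDist {n : ℕ} (ρ σ : Matrix (Fin n) (Fin n) ℂ) : ℝ :=
  if h : (ρ - σ).IsHermitian then (1 / 2) * ∑ i, |h.eigenvalues i| else 0

open Complex

lemma sum_two {M : Type*} [AddCommMonoid M] {n : ℕ} {i j : Fin n} (hij : i ≠ j)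
    (f : Fin n → M) (h : ∀ x, x ≠ i → x ≠ j → f x = 0) : ∑ x, f x = f i + f j := by
  rw [← Finset.sum_subset (Finset.subset_univ ({i, j} : Finset (Fin n)))]
  · rw [Finset.sum_pair hij]
  · intro x _ hx
    simp only [Finset.mem_insert, Finset.mem_singleton] at hx
    push_neg at hx
    exact h x hx.1 hx.2

lemma core {n : ℕ} (d : Fin n → ℝ) (ψ : Fin n → ℂ)
    (hd : ∑ i, d i = 0)
    (key : ∀ w : Fin n → ℂ,
      0 ≤ ∑ i, d i * ‖w i‖ ^ 2 + ‖∑ j, (starRingEnd ℂ) (ψ j) * w j‖ ^ 2) :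
    ∑ i, d i * ‖ψ i‖ ^ 2 + ((1 / 2) * ∑ i, |d i|) ^ 2 ≤ 0 := by
  by_cases hpos : ∀ i, 0 ≤ d i
  · have hzero : ∀ i ∈ Finset.univ, d i = 0 :=
      (Finset.sum_eq_zero_iff_of_nonneg (fun i _ => hpos i)).mp hd
    have h1 : ∑ i, d i * ‖ψ i‖ ^ 2 = 0 := Finset.sum_eq_zero fun i hi => by
      rw [hzero i hi]; ring
    have h2 : ∑ i, |d i| = 0 := Finset.sum_eq_zero fun i hi => by
      rw [hzero i hi]; simp
    rw [h1, h2]; norm_num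
  · push_neg at hpos
    obtain ⟨k, hk⟩ := hpos
    have keySingle : ∀ i, 0 ≤ d i + ‖ψ i‖ ^ 2 := by
      intro i
      have h := key (fun x => if x = i then 1 else 0)
      rw [Fintype.sum_eq_single i (fun x hx => by simp [hx]),
          Fintype.sum_eq_single i (fun x hx => by simp [hx])] at h
      simpa using h
    have keyPair : ∀ i j, i ≠ j → ∀ a b : ℂ,
        0 ≤ d i * ‖a‖ ^ 2 + d j * ‖b‖ ^ 2
          + ‖(starRingEnd ℂ) (ψ i) * a + (starRingEnd ℂ) (ψ j) * b‖ ^ 2 := by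
      intro i j hij a b
      have h := key (fun x => if x = i then a else if x = j then b else 0)
      rw [sum_two hij _ (fun x hxi hxj => by simp [hxi, hxj]),
          sum_two hij _ (fun x hxi hxj => by simp [hxi, hxj])] at h
      simpa [Ne.symm hij] using h
    have hknn : ∀ i, i ≠ k → 0 ≤ d i := by
      intro i hik
      by_contra hdi
      rw [not_le] at hdi
      have h1 := keyPair k i (Ne.symm hik) ((starRingEnd ℂ) (ψ i)) (-(starRingEnd ℂ) (ψ k))
      have hz : (starRingEnd ℂ) (ψ k) * (starRingEnd ℂ) (ψ i)
          + (starRingEnd ℂ) (ψ i) * (-(starRingEnd ℂ) (ψ k)) = 0 := by ring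
      rw [hz] at h1
      simp only [norm_zero, RCLike.norm_conj, norm_neg] at h1
      have hψi : ‖ψ i‖ ^ 2 = 0 := by nlinarith [sq_nonneg ‖ψ i‖, sq_nonneg ‖ψ k‖]
      have h2 := keySingle i
      nlinarith
    set μ : ℝ := -d k with hμdef
    set t : ℝ := ‖ψ k‖ ^ 2 with htdef
    have hμpos : 0 < μ := by simp [hμdef]; linarith
    have hμt : μ ≤ t := by have := keySingle k; rw [← htdef] at this; linarith
    have hstep : ∀ i, i ≠ k → μ * ‖ψ i‖ ^ 2 ≤ (t - μ) * d i := by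
      intro i hik
      have hb := keySingle i
      rcases eq_or_lt_of_le hb with hb0 | hbpos
      · have hdi := hknn i hik
        nlinarith [sq_nonneg ‖ψ i‖]
      · have h1 := keyPair k i (Ne.symm hik) ((d i + ‖ψ i‖ ^ 2 : ℝ) : ℂ)
          (-(starRingEnd ℂ) (ψ k) * ψ i)
        have hcm : (starRingEnd ℂ) (ψ i) * ψ i = ((‖ψ i‖ ^ 2 : ℝ) : ℂ) := by
          rw [mul_comm, Complex.mul_conj']
          push_cast
          ring
        have hs : (starRingEnd ℂ) (ψ k) * ((d i + ‖ψ i‖ ^ 2 : ℝ) : ℂ)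
            + (starRingEnd ℂ) (ψ i) * (-(starRingEnd ℂ) (ψ k) * ψ i)
            = (starRingEnd ℂ) (ψ k) * ((d i : ℝ) : ℂ) := by
          have : (starRingEnd ℂ) (ψ i) * (-(starRingEnd ℂ) (ψ k) * ψ i)
              = -(starRingEnd ℂ) (ψ k) * ((starRingEnd ℂ) (ψ i) * ψ i) := by ring
          rw [this, hcm]
          push_cast
          ring
        rw [hs] at h1
        have hnb : ‖((d i + ‖ψ i‖ ^ 2 : ℝ) : ℂ)‖ ^ 2 = (d i + ‖ψ i‖ ^ 2) ^ 2 := by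
          rw [Complex.norm_real, Real.norm_eq_abs, _root_.sq_abs]
        have hn2 : ‖-(starRingEnd ℂ) (ψ k) * ψ i‖ ^ 2 = t * ‖ψ i‖ ^ 2 := by
          rw [norm_mul, norm_neg, RCLike.norm_conj, mul_pow, htdef]
        have hn3 : ‖(starRingEnd ℂ) (ψ k) * ((d i : ℝ) : ℂ)‖ ^ 2 = t * d i ^ 2 := by
          rw [norm_mul, RCLike.norm_conj, Complex.norm_real, mul_pow, Real.norm_eq_abs,
            _root_.sq_abs, htdef]
        rw [hnb, hn2, hn3] at h1
        nlinarith [hbpos, mul_pos hbpos hbpos, h1]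
    set s : Finset (Fin n) := Finset.univ.erase k with hsdef
    have herase : ∀ i ∈ s, i ≠ k := fun i hi => Finset.ne_of_mem_erase hi
    have hsum_d : ∑ i ∈ s, d i = μ := by
      have h := Finset.sum_erase_add Finset.univ d (Finset.mem_univ k)
      rw [hd] at h
      rw [hμdef, ← hsdef] at *
      linarith
    have habs : ∑ i, |d i| = 2 * μ := by
      rw [← Finset.sum_erase_add Finset.univ _ (Finset.mem_univ k), abs_of_neg hk]
      have : ∑ i ∈ Finset.univ.erase k, |d i| = ∑ i ∈ s, d i :=
        Finset.sum_congr (by rw [hsdef]) fun i hi => abs_of_nonneg (hknn i (herase i hi))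
      rw [this, hsum_d]
      rw [hμdef]; ring
    have hdle : ∀ i ∈ s, d i ≤ μ := fun i hi =>
      hsum_d ▸ Finset.single_le_sum (fun j hj => hknn j (herase j hj)) hi
    have hsq : ∑ i ∈ s, d i ^ 2 ≤ μ ^ 2 := by
      calc ∑ i ∈ s, d i ^ 2 ≤ ∑ i ∈ s, μ * d i :=
            Finset.sum_le_sum fun i hi => by nlinarith [hknn i (herase i hi), hdle i hi]
        _ = μ * ∑ i ∈ s, d i := by rw [Finset.mul_sum]
        _ = μ ^ 2 := by rw [hsum_d]; ring
    have hS : μ * (∑ i ∈ s, d i * ‖ψ i‖ ^ 2) ≤ (t - μ) * μ ^ 2 := by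
      calc μ * (∑ i ∈ s, d i * ‖ψ i‖ ^ 2) = ∑ i ∈ s, d i * (μ * ‖ψ i‖ ^ 2) := by
            rw [Finset.mul_sum]; exact Finset.sum_congr rfl fun i _ => by ring
        _ ≤ ∑ i ∈ s, (t - μ) * d i ^ 2 := Finset.sum_le_sum fun i hi => by
            have h1 := hstep i (herase i hi)
            have h2 := hknn i (herase i hi)
            nlinarith
        _ = (t - μ) * ∑ i ∈ s, d i ^ 2 := by rw [Finset.mul_sum]
        _ ≤ (t - μ) * μ ^ 2 := by
            apply mul_le_mul_of_nonneg_left hsq; linarith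
    have hSle : ∑ i ∈ s, d i * ‖ψ i‖ ^ 2 ≤ (t - μ) * μ := by nlinarith [hS]
    have hsplit : ∑ i, d i * ‖ψ i‖ ^ 2 = (∑ i ∈ s, d i * ‖ψ i‖ ^ 2) + d k * t := by
      rw [← Finset.sum_erase_add Finset.univ _ (Finset.mem_univ k), htdef, hsdef]
    rw [habs, hsplit, hμdef] at *
    nlinarith [hSle]

open Matrix Complex
open scoped ComplexOrder


lemma conj_mul_self (z : ℂ) : (starRingEnd ℂ) z * z = ((‖z‖ ^ 2 : ℝ) : ℂ) := by
  rw [mul_comm, Complex.mul_conj']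
  push_cast; ring

lemma dot_self_eq {n : ℕ} (v : Fin n → ℂ) :
    star v ⬝ᵥ v = ((∑ i, ‖v i‖ ^ 2 : ℝ) : ℂ) := by
  push_cast
  simp only [dotProduct, Pi.star_apply, Complex.star_def]
  exact Finset.sum_congr rfl fun i _ => by rw [conj_mul_self]; push_cast; ring

lemma quad_P {n : ℕ} (ψ v : Fin n → ℂ) :
    star v ⬝ᵥ (Matrix.vecMulVec ψ (star ψ) *ᵥ v) = ((‖star ψ ⬝ᵥ v‖ ^ 2 : ℝ) : ℂ) := by
  have h1 : Matrix.vecMulVec ψ (star ψ) *ᵥ v = fun a => ψ a * (star ψ ⬝ᵥ v) := by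
    funext a
    simp [Matrix.mulVec, Matrix.vecMulVec_apply, dotProduct, Finset.mul_sum, mul_assoc]
  rw [h1]
  have hconj : (starRingEnd ℂ) (star ψ ⬝ᵥ v) = ∑ a, (starRingEnd ℂ) (v a) * ψ a := by
    simp only [dotProduct, Pi.star_apply, Complex.star_def, map_sum]
    refine Finset.sum_congr rfl fun a _ => ?_
    rw [RingHom.map_mul, Complex.conj_conj]
    ring
  have h2 : (star v ⬝ᵥ fun a => ψ a * (star ψ ⬝ᵥ v))
      = (starRingEnd ℂ) (star ψ ⬝ᵥ v) * (star ψ ⬝ᵥ v) := by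
    rw [hconj, Finset.sum_mul]
    simp only [dotProduct, Pi.star_apply, Complex.star_def]
    exact Finset.sum_congr rfl fun a _ => by ring
  rw [h2, conj_mul_self]

lemma quad_D {n : ℕ} (d : Fin n → ℝ) (w : Fin n → ℂ) :
    star w ⬝ᵥ (Matrix.diagonal (fun i => (d i : ℂ)) *ᵥ w)
      = ((∑ i, d i * ‖w i‖ ^ 2 : ℝ) : ℂ) := by
  push_cast
  simp only [dotProduct, Matrix.mulVec_diagonal, Pi.star_apply, Complex.star_def]
  refine Finset.sum_congr rfl fun i _ => ?_
  have := conj_mul_self (w i)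
  calc (starRingEnd ℂ) (w i) * ((d i : ℂ) * w i)
      = (d i : ℂ) * ((starRingEnd ℂ) (w i) * w i) := by ring
    _ = (d i : ℂ) * ((‖w i‖ ^ 2 : ℝ) : ℂ) := by rw [this]
    _ = _ := by push_cast; ring


/-- ⟨ψ|ρ|ψ⟩ + ‖ρ − |ψ⟩⟨ψ|‖_tr² ≤ 1. -/
theorem fidelity_traceDist {n : ℕ} (ρ : Matrix (Fin n) (Fin n) ℂ)
    (hρ : ρ.PosSemidef) (hρtr : ρ.trace = 1)
    (ψ : Fin n → ℂ) (hψ : ∑ i, ‖ψ i‖ ^ 2 = 1) :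
    (∑ a, ∑ b, (starRingEnd ℂ) (ψ a) * ρ a b * ψ b).re
      + traceDist ρ (Matrix.vecMulVec ψ (star ψ)) ^ 2 ≤ 1 := by
  classical
  set P : Matrix (Fin n) (Fin n) ℂ := Matrix.vecMulVec ψ (star ψ) with hPdef
  have hPH : P.IsHermitian := by
    ext i j
    simp [hPdef, Matrix.conjTranspose_apply, Matrix.vecMulVec_apply, mul_comm]
  have hH : (ρ - P).IsHermitian := hρ.1.sub hPH
  set d : Fin n → ℝ := hH.eigenvalues with hddef
  set U : Matrix (Fin n) (Fin n) ℂ :=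
    (Matrix.IsHermitian.eigenvectorUnitary hH : Matrix (Fin n) (Fin n) ℂ) with hUdef
  have hU1 : U * star U = 1 :=
    (Matrix.mem_unitaryGroup_iff).mp (Matrix.IsHermitian.eigenvectorUnitary hH).2
  have hU2 : star U * U = 1 :=
    (Matrix.mem_unitaryGroup_iff').mp (Matrix.IsHermitian.eigenvectorUnitary hH).2
  set D : Matrix (Fin n) (Fin n) ℂ := Matrix.diagonal (fun i => (d i : ℂ)) with hDdef
  have hspec : ρ = U * D * star U + P := by
    have h := hH.spectral_theorem
    have hdiag : Matrix.diagonal (RCLike.ofReal ∘ hH.eigenvalues) = D := rfl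
    rw [hdiag, Unitary.conjStarAlgAut_apply] at h
    rw [← h]
    abel
  set ψ' : Fin n → ℂ := star U *ᵥ ψ with hψ'def
  have hstar : star ψ' = star ψ ᵥ* U := by
    rw [hψ'def, Matrix.star_mulVec, Matrix.star_eq_conjTranspose, Matrix.conjTranspose_conjTranspose]
  -- trace condition
  have htrP : P.trace = 1 := by
    have : P.trace = ((∑ i, ‖ψ i‖ ^ 2 : ℝ) : ℂ) := by
      rw [Matrix.trace]
      push_cast
      simp only [Matrix.diag, hPdef, Matrix.vecMulVec_apply, Pi.star_apply, Complex.star_def]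
      refine Finset.sum_congr rfl fun i _ => ?_
      rw [mul_comm, conj_mul_self]; push_cast; ring
    rw [this, hψ]; norm_num
  have hd0 : ∑ i, d i = 0 := by
    have h1 : (ρ - P).trace = 0 := by rw [Matrix.trace_sub, hρtr, htrP, sub_self]
    have h2 : (ρ - P).trace = ((∑ i, d i : ℝ) : ℂ) := by
      have : ρ - P = U * D * star U := by rw [hspec]; abel
      rw [this, Matrix.trace_mul_cycle, hU2, Matrix.one_mul, Matrix.trace_diagonal]
      push_cast; rfl
    rw [h1] at h2
    exact_mod_cast h2.symm
  -- the quadratic form inequality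
  have key : ∀ w : Fin n → ℂ,
      0 ≤ ∑ i, d i * ‖w i‖ ^ 2 + ‖∑ j, (starRingEnd ℂ) (ψ' j) * w j‖ ^ 2 := by
    intro w
    have hpos := hρ.dotProduct_mulVec_nonneg (U *ᵥ w)
    have hsw : star (U *ᵥ w) = star w ᵥ* star U := by
      rw [Matrix.star_mulVec, Matrix.star_eq_conjTranspose]
    have e1 : ρ *ᵥ (U *ᵥ w) = U *ᵥ (D *ᵥ w) + P *ᵥ (U *ᵥ w) := by
      rw [hspec, Matrix.add_mulVec]
      congr 1
      rw [Matrix.mulVec_mulVec, Matrix.mul_assoc, Matrix.mul_assoc, hU2, Matrix.mul_one,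
        ← Matrix.mulVec_mulVec]
    have e2 : star (U *ᵥ w) ⬝ᵥ (U *ᵥ (D *ᵥ w)) = ((∑ i, d i * ‖w i‖ ^ 2 : ℝ) : ℂ) := by
      rw [hsw, ← Matrix.dotProduct_mulVec, Matrix.mulVec_mulVec, hU2, Matrix.one_mulVec, quad_D]
    have e3 : star (U *ᵥ w) ⬝ᵥ (P *ᵥ (U *ᵥ w))
        = ((‖∑ j, (starRingEnd ℂ) (ψ' j) * w j‖ ^ 2 : ℝ) : ℂ) := by
      rw [quad_P]
      congr 2
      rw [Matrix.dotProduct_mulVec, ← hstar]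
      simp [dotProduct]
    rw [e1, dotProduct_add, e2, e3, ← Complex.ofReal_add] at hpos
    exact_mod_cast hpos
  -- fidelity expression
  have hF : (∑ a, ∑ b, (starRingEnd ℂ) (ψ a) * ρ a b * ψ b).re
      = ∑ i, d i * ‖ψ' i‖ ^ 2 + 1 := by
    have hdd : (∑ a, ∑ b, (starRingEnd ℂ) (ψ a) * ρ a b * ψ b) = star ψ ⬝ᵥ (ρ *ᵥ ψ) := by
      simp only [dotProduct, Matrix.mulVec, Pi.star_apply, Complex.star_def, Finset.mul_sum]
      exact Finset.sum_congr rfl fun a _ => Finset.sum_congr rfl fun b _ => by ring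
    have e1 : ρ *ᵥ ψ = U *ᵥ (D *ᵥ ψ') + P *ᵥ ψ := by
      rw [hspec, Matrix.add_mulVec]
      congr 1
      rw [← Matrix.mulVec_mulVec, ← Matrix.mulVec_mulVec, hψ'def]
    have e2 : star ψ ⬝ᵥ (U *ᵥ (D *ᵥ ψ')) = ((∑ i, d i * ‖ψ' i‖ ^ 2 : ℝ) : ℂ) := by
      rw [Matrix.dotProduct_mulVec, ← hstar, quad_D]
    have e3 : star ψ ⬝ᵥ (P *ᵥ ψ) = 1 := by
      rw [quad_P, dot_self_eq, hψ]
      norm_num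
    rw [hdd, e1, dotProduct_add, e2, e3, Complex.add_re, Complex.ofReal_re,
      Complex.one_re]
  have hcore := core d ψ' hd0 key
  rw [traceDist, dif_pos hH, hF]
  have : (1 / 2 * ∑ i, |hH.eigenvalues i|) = (1 / 2 * ∑ i, |d i|) := by rw [hddef]
  rw [this]
  linarith [hcore]
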